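/- Let D' be a balanced bipartite digraph with colour classes X' and Y' of cardinality a' ≥ 3, let M' be a complete matching from X' to Y' in D', and suppose D' satisfies condition (A): d(x') + d(y') + d(x'') + d(y'') ≥ 6a' + 2 for all pairwise distinct x', x'' ∈ X', y', y'' ∈ Y' such that D' contains M'-compatible paths from x' to y' and from x'' to y''. Then D' contains an M'-compatible oriented cycle of length at least a'. -/

import Mathlib

namespace BipDigraph

variable {V : Type}

/-- Out-degree of `v` in the digraph `(V, A)`. -/
noncomputable def outdeg (A : V → V → Prop) (v : V) : ℕ := Nat.card {w : V // A v w}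

/-- In-degree of `v` in the digraph `(V, A)`. -/
noncomputable def indeg (A : V → V → Prop) (v : V) : ℕ := Nat.card {w : V // A w v}

/-- Degree of `v`: out-degree plus in-degree. -/
noncomputable def deg (A : V → V → Prop) (v : V) : ℕ := outdeg A v + indeg A v

/-- Out-degree of `v` relative to the vertex set `S`. -/
noncomputable def outdegIn (A : V → V → Prop) (S : Set V) (v : V) : ℕ := Nat.card {w : V // w ∈ S ∧ A v w}

/-- In-degree of `v` relative to the vertex set `S`. -/
noncomputable def indegIn (A : V → V → Prop) (S : Set V) (v : V) : ℕ := Nat.card {w : V // w ∈ S ∧ A w v}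

/-- Degree of `v` relative to the vertex set `S`. -/
noncomputable def degIn (A : V → V → Prop) (S : Set V) (v : V) : ℕ := outdegIn A S v + indegIn A S v

/-- The arc `(u,v)` belongs to the matching given by the function `M` on the class `X`. -/
def InM (X : Finset V) (M : V → V) (u v : V) : Prop := u ∈ X ∧ M u = v

/-- The arc `(u,v)` is an arc of the digraph not belonging to the matching. -/
def NotM (A : V → V → Prop) (X : Finset V) (M : V → V) (u v : V) : Prop :=
  A u v ∧ ¬ InM X M u v

/-- `M` is a complete matching from `X` to `Y`: every `x ∈ X` is matched along an arc
to a vertex of `Y`, and the matching arcs are independent. -/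
def CompleteMatching (A : V → V → Prop) (X Y : Finset V) (M : V → V) : Prop :=
  (∀ x ∈ X, M x ∈ Y ∧ A x (M x)) ∧ Set.InjOn M X

/-- Consecutive arcs of the list alternately satisfy `P` and `Q`, starting with `P`. -/
def Alt (P Q : V → V → Prop) : List V → Prop
  | [] => True
  | [_] => True
  | a :: b :: t => P a b ∧ Alt Q P (b :: t)

/-- `p` is an oriented path in `(V, A)` whose arcs are alternately in the matching `M`
(on `X`) and outside of it. -/
def IsCompatPath (A : V → V → Prop) (X : Finset V) (M : V → V) (p : List V) : Prop :=
  p ≠ [] ∧ p.Nodup ∧ p.Chain' A ∧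
    (Alt (InM X M) (NotM A X M) p ∨ Alt (NotM A X M) (InM X M) p)

/-- An `M`-compatible oriented path from `u` to `v`. -/
def IsCompatPathFromTo (A : V → V → Prop) (X : Finset V) (M : V → V)
    (p : List V) (u v : V) : Prop :=
  IsCompatPath A X M p ∧ p.head? = some u ∧ p.getLast? = some v

/-- `p` lists the vertices of an oriented cycle of `(V, A)` in cyclic order;
its length (number of arcs = number of vertices) is `p.length`. -/
def IsCycle (A : V → V → Prop) (p : List V) : Prop :=
  2 ≤ p.length ∧ p.Nodup ∧ ∃ u, p.head? = some u ∧ List.Chain' A (p ++ [u])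

/-- `p` is an oriented cycle whose arcs are alternately in the matching `M` (on `X`)
and outside of it. -/
def IsCompatCycle (A : V → V → Prop) (X : Finset V) (M : V → V) (p : List V) : Prop :=
  2 ≤ p.length ∧ p.Nodup ∧ ∃ u, p.head? = some u ∧ List.Chain' A (p ++ [u]) ∧
    (Alt (InM X M) (NotM A X M) (p ++ [u]) ∨ Alt (NotM A X M) (InM X M) (p ++ [u]))

/-- The digraph `(V, A)` contains an oriented cycle of length `n`. -/
def HasCycleOfLength (A : V → V → Prop) (n : ℕ) : Prop :=
  ∃ p : List V, IsCycle A p ∧ p.length = n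

/-- `(V, A)` is a balanced bipartite digraph with colour classes `X`, `Y` of cardinality `a`. -/
def BalancedBipartite (A : V → V → Prop) (X Y : Finset V) (a : ℕ) : Prop :=
  X.card = a ∧ Y.card = a ∧ Disjoint X Y ∧ (∀ v : V, v ∈ X ∨ v ∈ Y) ∧
    ∀ u v : V, A u v → (u ∈ X ∧ v ∈ Y) ∨ (u ∈ Y ∧ v ∈ X)

/-- Condition (M): `d(u) + d(v) ≥ 3a + 1` for every pair of distinct vertices `u, v`
with no arc between them in either direction. -/
def CondM (A : V → V → Prop) (a : ℕ) : Prop :=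
  ∀ u v : V, u ≠ v → ¬ A u v → ¬ A v u → 3 * a + 1 ≤ deg A u + deg A v

/-- Condition (A): `d(x') + d(y') + d(x'') + d(y'') ≥ 6a + 2` for all pairwise distinct
`x', x'' ∈ X`, `y', y'' ∈ Y` joined by `M`-compatible paths from `x'` to `y'` and from
`x''` to `y''`. -/
def CondA (A : V → V → Prop) (X Y : Finset V) (M : V → V) (a : ℕ) : Prop :=
  ∀ x' x'' y' y'' : V, x' ∈ X → x'' ∈ X → y' ∈ Y → y'' ∈ Y → x' ≠ x'' → y' ≠ y'' →
    (∃ p, IsCompatPathFromTo A X M p x' y') → (∃ p, IsCompatPathFromTo A X M p x'' y'') →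
    6 * a + 2 ≤ deg A x' + deg A y' + deg A x'' + deg A y''

/-- An `M`-compatible cycle all of whose vertices lie in `S`. -/
def IsCompatCycleIn (A : V → V → Prop) (X : Finset V) (M : V → V) (S : Set V)
    (p : List V) : Prop :=
  IsCompatCycle A X M p ∧ ∀ v ∈ p, v ∈ S

/-- An `M`-compatible path from `u` to `v` all of whose vertices lie in `S`. -/
def IsCompatPathFromToIn (A : V → V → Prop) (X : Finset V) (M : V → V) (S : Set V)
    (p : List V) (u v : V) : Prop :=
  IsCompatPathFromTo A X M p u v ∧ ∀ w ∈ p, w ∈ S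

/-- The digraph `(V, A)` is strongly connected. -/
def StronglyConnected (A : V → V → Prop) : Prop :=
  ∀ u v : V, u ≠ v →
    ∃ p : List V, p.Chain' A ∧ p.head? = some u ∧ p.getLast? = some v


/-! ### Auxiliary machinery for the proof of Statement 6 -/

section Aux

variable [Fintype V] [DecidableEq V]

/-- The auxiliary digraph on `X`: an arc `u → v` when the digraph has the non-matching
arc `M u → v`. -/
def Hrel (A : V → V → Prop) (X : Finset V) (M : V → V) (u v : V) : Prop :=
  u ∈ X ∧ v ∈ X ∧ A (M u) v

/-- A path of the digraph `H` all of whose vertices lie in `S`. -/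
def IsPathIn (H : V → V → Prop) (S : Finset V) (p : List V) : Prop :=
  p ≠ [] ∧ p.Nodup ∧ p.Chain' H ∧ ∀ v ∈ p, v ∈ S

/-- A cycle in the digraph `H` (a nonempty nodup chain with a closing arc). -/
def IsHCycle (H : V → V → Prop) (c : List V) : Prop :=
  c.Nodup ∧ c.Chain' H ∧ ∃ u v, c.head? = some u ∧ c.getLast? = some v ∧ H v u

/-- `u` is reachable from `x` by a (possibly trivial) path of `H`. -/
def Reach (H : V → V → Prop) (x u : V) : Prop :=
  ∃ p, p ≠ [] ∧ p.Nodup ∧ p.Chain' H ∧ p.head? = some x ∧ p.getLast? = some u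

noncomputable def outN (H : V → V → Prop) (u : V) : ℕ := {y | H u y}.ncard
noncomputable def inN (H : V → V → Prop) (u : V) : ℕ := {y | H y u}.ncard

set_option linter.unusedSectionVars false

lemma exists_maximal_path (H : V → V → Prop) (S : Finset V) (hS : S.Nonempty) :
    ∃ p, IsPathIn H S p ∧ ∀ q, IsPathIn H S q → q.length ≤ p.length := by
  classical
  obtain ⟨x, hx⟩ := hS
  have hne : Nonempty V := ⟨x⟩
  set P : ℕ → Prop := fun ℓ => ∃ p, IsPathIn H S p ∧ p.length = ℓ with hP
  have h1 : P 1 := ⟨[x], ⟨by simp, by simp, List.isChain_singleton x, by simpa using hx⟩, rfl⟩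
  have h1b : (1 : ℕ) ≤ Fintype.card V := Fintype.card_pos
  obtain ⟨p, hp, hplen⟩ := Nat.findGreatest_spec h1b h1
  refine ⟨p, hp, fun q hq => ?_⟩
  have hqb : q.length ≤ Fintype.card V := hq.2.1.length_le_card
  have : q.length ≤ Nat.findGreatest P (Fintype.card V) :=
    Nat.le_findGreatest hqb (⟨q, hq, rfl⟩ : P q.length)
  omega

lemma endpoint_out (H : V → V → Prop) (S : Finset V) (m : ℕ) (p : List V)
    (hp : IsPathIn H S p)
    (hmax : ∀ q, IsPathIn H S q → q.length ≤ p.length)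
    (hc : ∀ c, IsHCycle H c → (∀ v ∈ c, v ∈ S) → c.length ≤ m)
    (u : V) (hu : p.getLast? = some u) :
    {y | y ∈ S ∧ H u y}.ncard ≤ m := by
  classical
  obtain ⟨hne, hnd, hch, hmem⟩ := hp
  set N := {y | y ∈ S ∧ H u y} with hN
  have hNp : ∀ y ∈ N, y ∈ p := by
    intro y hy
    by_contra hyp
    have hq : IsPathIn H S (p ++ [y]) := by
      refine ⟨by simp, ?_, ?_, ?_⟩
      · simp [List.nodup_append, hnd]
        intro x hx hxy; subst hxy; exact hyp hx
      · refine List.isChain_append.mpr ⟨hch, by simp, ?_⟩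
        intro x hx y' hy'
        simp at hy'
        rw [hu] at hx
        simp at hx
        subst hx; subst hy'
        exact hy.2
      · intro v hv
        rcases List.mem_append.mp hv with h | h
        · exact hmem v h
        · simp at h; subst h; exact hy.1
    have := hmax _ hq
    simp at this
  rcases Set.eq_empty_or_nonempty N with h | ⟨y₀, hy₀⟩
  · simp [hN] at h ⊢
    rw [h]
    simp
  · set Q : ℕ → Prop := fun j => ∃ h : j < p.length, p[j] ∈ N with hQdef
    have hQ : ∃ j, Q j := by
      obtain ⟨j, hj, hget⟩ := List.mem_iff_getElem.mp (hNp y₀ hy₀)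
      exact ⟨j, hj, hget ▸ hy₀⟩
    have : DecidablePred Q := fun _ => Classical.propDecidable _
    set i := Nat.find hQ with hidef
    obtain ⟨hi, hgi⟩ := Nat.find_spec hQ
    set c := p.drop i with hcdef
    have hcne : c ≠ [] := by
      simp [hcdef]; omega
    have hchead : c.head? = some p[i] := by
      rw [hcdef, List.drop_eq_getElem_cons hi]; rfl
    have hclast : c.getLast? = some u := by
      rw [← List.take_append_drop i p, List.getLast?_append_of_ne_nil _ hcne] at hu
      exact hu
    have hcyc : IsHCycle H c := by
      refine ⟨hnd.sublist (List.drop_sublist _ _), hch.drop i, p[i], u, hchead, hclast, hgi.2⟩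
    have hcS : ∀ v ∈ c, v ∈ S := fun v hv => hmem v (List.drop_subset _ _ hv)
    have hlen := hc c hcyc hcS
    have hsub : N ⊆ (↑c.toFinset : Set V) := by
      intro y hy
      obtain ⟨j, hj, hget⟩ := List.mem_iff_getElem.mp (hNp y hy)
      have hij : i ≤ j := Nat.find_min' hQ ⟨hj, hget ▸ hy⟩
      have hj2 : j - i < c.length := by simp [hcdef]; omega
      have hyc : y ∈ c := by
        refine List.mem_iff_getElem.mpr ⟨j - i, hj2, ?_⟩
        show (List.drop i p)[j - i]'(hcdef ▸ hj2) = y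
        rw [List.getElem_drop]
        simp only [show i + (j - i) = j from by omega]
        exact hget
      simpa using hyc
    have h1 : N.ncard ≤ (↑c.toFinset : Set V).ncard :=
      Set.ncard_le_ncard hsub (Finset.finite_toSet _)
    rw [Set.ncard_coe_finset] at h1
    exact h1.trans ((c.toFinset_card_le).trans hlen)

lemma isHCycle_reverse {H : V → V → Prop} {c : List V} (h : IsHCycle (flip H) c) :
    IsHCycle H c.reverse := by
  obtain ⟨hnd, hch, u, v, hh, hl, hvu⟩ := h
  exact ⟨List.nodup_reverse.mpr hnd, List.isChain_reverse.mpr hch, v, u,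
    by rw [List.head?_reverse]; exact hl, by rw [List.getLast?_reverse]; exact hh, hvu⟩

lemma endpoint_in (H : V → V → Prop) (S : Finset V) (m : ℕ) (p : List V)
    (hp : IsPathIn H S p)
    (hmax : ∀ q, IsPathIn H S q → q.length ≤ p.length)
    (hc : ∀ c, IsHCycle H c → (∀ v ∈ c, v ∈ S) → c.length ≤ m)
    (z : V) (hz : p.head? = some z) :
    {y | y ∈ S ∧ H y z}.ncard ≤ m := by
  have hp' : IsPathIn (flip H) S p.reverse :=
    ⟨by simpa using hp.1, List.nodup_reverse.mpr hp.2.1, List.isChain_reverse.mpr hp.2.2.1,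
      fun v hv => hp.2.2.2 v (List.mem_reverse.mp hv)⟩
  have hmax' : ∀ q, IsPathIn (flip H) S q → q.length ≤ p.reverse.length := by
    intro q hq
    have hq' : IsPathIn H S q.reverse :=
      ⟨by simpa using hq.1, List.nodup_reverse.mpr hq.2.1, List.isChain_reverse.mpr hq.2.2.1,
        fun v hv => hq.2.2.2 v (List.mem_reverse.mp hv)⟩
    have := hmax _ hq'
    simpa using this
  have hc' : ∀ c, IsHCycle (flip H) c → (∀ v ∈ c, v ∈ S) → c.length ≤ m := by
    intro c hcyc hcm
    have := hc c.reverse (isHCycle_reverse hcyc) (fun v hv => hcm v (List.mem_reverse.mp hv))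
    simpa using this
  exact endpoint_out (flip H) S m p.reverse hp' hmax' hc' z
    (by rw [List.getLast?_reverse]; exact hz)

lemma key (H : V → V → Prop) (X : Finset V) (hHX : ∀ u v, H u v → u ∈ X ∧ v ∈ X)
    (a : ℕ) (ha : 3 ≤ a) (hXcard : X.card = a)
    (star : ∀ z₁ u₁ z₂ u₂, z₁ ∈ X → u₁ ∈ X → z₂ ∈ X → u₂ ∈ X →
      Reach H z₁ u₁ → Reach H z₂ u₂ → z₁ ≠ z₂ → u₁ ≠ u₂ →
      2*a+2 ≤ inN H z₁ + outN H u₁ + inN H z₂ + outN H u₂) :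
    ∃ c, IsHCycle H c ∧ (∀ v ∈ c, v ∈ X) ∧ (a+1)/2 ≤ c.length := by
  classical
  by_contra hcon
  push_neg at hcon
  set m := (a+1)/2 with hm
  have hm2 : 2 ≤ m := by omega
  have main : ∀ S : Finset V, S ⊆ X → S.Nonempty →
      ∃ z u, z ∈ S ∧ u ∈ S ∧ Reach H z u ∧
        {y | y ∈ S ∧ H y z}.ncard ≤ m - 1 ∧ {y | y ∈ S ∧ H u y}.ncard ≤ m - 1 := by
    intro S hSX hSne
    obtain ⟨p, hp, hmax⟩ := exists_maximal_path H S hSne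
    have hpne := hp.1
    have hcS : ∀ c, IsHCycle H c → (∀ v ∈ c, v ∈ S) → c.length ≤ m - 1 := by
      intro c hcyc hcm
      have := hcon c hcyc (fun v hv => hSX (hcm v hv))
      omega
    obtain ⟨z, hz⟩ : ∃ z, p.head? = some z := ⟨p.head hpne, List.head?_eq_head hpne⟩
    obtain ⟨u, hu⟩ : ∃ u, p.getLast? = some u :=
      ⟨p.getLast hpne, List.getLast?_eq_getLast hpne⟩
    have hzS : z ∈ S := hp.2.2.2 z (by
      have := List.head?_eq_head hpne
      rw [hz] at this
      exact (Option.some_injective _ this) ▸ p.head_mem hpne)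
    have huS : u ∈ S := hp.2.2.2 u (by
      have := List.getLast?_eq_getLast hpne
      rw [hu] at this
      exact (Option.some_injective _ this) ▸ p.getLast_mem hpne)
    exact ⟨z, u, hzS, huS, ⟨p, hpne, hp.2.1, hp.2.2.1, hz, hu⟩,
      endpoint_in H S (m-1) p hp hmax hcS z hz,
      endpoint_out H S (m-1) p hp hmax hcS u hu⟩
  have hXne : X.Nonempty := Finset.card_pos.mp (by omega)
  obtain ⟨z₁, u₁, hz₁X, hu₁X, hr₁, hin₁', hout₁'⟩ := main X (le_refl _) hXne
  have hin₁ : inN H z₁ ≤ m - 1 := by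
    have : {y | H y z₁} = {y | y ∈ X ∧ H y z₁} := by
      ext y; exact ⟨fun h => ⟨(hHX y z₁ h).1, h⟩, fun h => h.2⟩
    rw [inN, this]; exact hin₁'
  have hout₁ : outN H u₁ ≤ m - 1 := by
    have : {y | H u₁ y} = {y | y ∈ X ∧ H u₁ y} := by
      ext y; exact ⟨fun h => ⟨(hHX u₁ y h).2, h⟩, fun h => h.2⟩
    rw [outN, this]; exact hout₁'
  have hbound : ∀ w : V, ∀ T : Finset V, T = X.erase w →
      ∀ z u, z ∈ T → u ∈ T →
      {y | y ∈ T ∧ H y z}.ncard ≤ m - 1 → {y | y ∈ T ∧ H u y}.ncard ≤ m - 1 →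
      inN H z ≤ m ∧ outN H u ≤ m := by
    rintro w T rfl z u hzT huT hin hout
    constructor
    · have hsub : {y | H y z} ⊆ insert w {y | y ∈ X.erase w ∧ H y z} := by
        intro y hy
        by_cases hyw : y = w
        · exact Or.inl hyw
        · exact Or.inr ⟨Finset.mem_erase.mpr ⟨hyw, (hHX y z hy).1⟩, hy⟩
      have := Set.ncard_le_ncard hsub (Set.toFinite _)
      have h2 := Set.ncard_insert_le w {y | y ∈ X.erase w ∧ H y z}
      rw [inN]; omega
    · have hsub : {y | H u y} ⊆ insert w {y | y ∈ X.erase w ∧ H u y} := by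
        intro y hy
        by_cases hyw : y = w
        · exact Or.inl hyw
        · exact Or.inr ⟨Finset.mem_erase.mpr ⟨hyw, (hHX u y hy).2⟩, hy⟩
      have := Set.ncard_le_ncard hsub (Set.toFinite _)
      have h2 := Set.ncard_insert_le w {y | y ∈ X.erase w ∧ H u y}
      rw [outN]; omega
  have hne₁ : (X.erase u₁).Nonempty := by
    rw [← Finset.card_pos, Finset.card_erase_of_mem hu₁X]; omega
  obtain ⟨z₂, u₂, hz₂T, hu₂T, hr₂, hin₂', hout₂'⟩ :=
    main (X.erase u₁) (Finset.erase_subset _ _) hne₁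
  obtain ⟨hin₂, hout₂⟩ := hbound u₁ _ rfl z₂ u₂ hz₂T hu₂T hin₂' hout₂'
  have hu₂u₁ : u₂ ≠ u₁ := Finset.ne_of_mem_erase hu₂T
  have hz₂X : z₂ ∈ X := Finset.mem_of_mem_erase hz₂T
  have hu₂X : u₂ ∈ X := Finset.mem_of_mem_erase hu₂T
  by_cases hz : z₂ = z₁
  · have hne₂ : (X.erase z₁).Nonempty := by
      rw [← Finset.card_pos, Finset.card_erase_of_mem hz₁X]; omega
    obtain ⟨z₃, u₃, hz₃T, hu₃T, hr₃, hin₃', hout₃'⟩ :=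
      main (X.erase z₁) (Finset.erase_subset _ _) hne₂
    obtain ⟨hin₃, hout₃⟩ := hbound z₁ _ rfl z₃ u₃ hz₃T hu₃T hin₃' hout₃'
    have hz₃z₁ : z₃ ≠ z₁ := Finset.ne_of_mem_erase hz₃T
    have hz₃X : z₃ ∈ X := Finset.mem_of_mem_erase hz₃T
    have hu₃X : u₃ ∈ X := Finset.mem_of_mem_erase hu₃T
    by_cases hu : u₃ = u₁
    · have hsum := star z₂ u₂ z₃ u₃ hz₂X hu₂X hz₃X hu₃X hr₂ hr₃
        (by rw [hz]; exact hz₃z₁.symm) (by rw [hu]; exact hu₂u₁)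
      have e1 : inN H z₂ ≤ m - 1 := by rw [hz]; exact hin₁
      have e2 : outN H u₃ ≤ m - 1 := by rw [hu]; exact hout₁
      omega
    · have hsum := star z₁ u₁ z₃ u₃ hz₁X hu₁X hz₃X hu₃X hr₁ hr₃ hz₃z₁.symm
        (fun h => hu h.symm)
      omega
  · have hsum := star z₁ u₁ z₂ u₂ hz₁X hu₁X hz₂X hu₂X hr₁ hr₂
      (fun h => hz h.symm) (fun h => hu₂u₁ h.symm)
    omega

end Aux

/-! ### Interleaving an `H`-path into an `M`-compatible path -/

def ilv (M : V → V) : List V → List V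
  | [] => []
  | h :: t => h :: M h :: ilv M t

lemma ilv_length (M : V → V) : ∀ l : List V, (ilv M l).length = 2 * l.length
  | [] => rfl
  | h :: t => by simp [ilv, ilv_length M t]; omega

lemma mem_ilv (M : V → V) : ∀ (l : List V) (v : V),
    v ∈ ilv M l ↔ ∃ x ∈ l, v = x ∨ v = M x
  | [], v => by simp [ilv]
  | h :: t, v => by
    simp [ilv, mem_ilv M t]
    constructor
    · rintro (rfl | rfl | ⟨x, hx, h⟩)
      · exact Or.inl (Or.inl rfl)
      · exact Or.inl (Or.inr rfl)
      · exact Or.inr ⟨x, hx, h⟩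
    · rintro ((rfl | rfl) | ⟨x, hx, h⟩)
      · exact Or.inl rfl
      · exact Or.inr (Or.inl rfl)
      · exact Or.inr (Or.inr ⟨x, hx, h⟩)

section WithData

variable [Fintype V] [DecidableEq V]
variable {A : V → V → Prop} {X Y : Finset V} {M : V → V}

set_option linter.unusedSectionVars false

lemma ilv_nodup (hdisj : Disjoint X Y) (hMY : ∀ x ∈ X, M x ∈ Y) (hMinj : Set.InjOn M X) :
    ∀ l : List V, l.Nodup → (∀ v ∈ l, v ∈ X) → (ilv M l).Nodup := by
  intro l
  induction l with
  | nil => simp [ilv]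
  | cons h t ih =>
    intro hnd hmem
    have hhX : h ∈ X := hmem h (by simp)
    have htX : ∀ v ∈ t, v ∈ X := fun v hv => hmem v (by simp [hv])
    have hht : h ∉ t := (List.nodup_cons.mp hnd).1
    have htnd : t.Nodup := (List.nodup_cons.mp hnd).2
    have hdisj' : ∀ x ∈ X, ∀ y ∈ Y, x ≠ y := by
      intro x hx y hy hxy
      exact Finset.disjoint_left.mp hdisj hx (hxy ▸ hy)
    simp only [ilv, List.nodup_cons]
    refine ⟨?_, ?_, ih htnd htX⟩
    · simp only [List.mem_cons, mem_ilv]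
      rintro (h1 | ⟨x, hx, (h2 | h2)⟩)
      · exact hdisj' h hhX (M h) (hMY h hhX) h1
      · exact hht (h2 ▸ hx)
      · exact hdisj' h hhX (M x) (hMY x (htX _ hx)) h2
    · rw [mem_ilv]
      rintro ⟨x, hx, (h1 | h1)⟩
      · exact hdisj' x (htX x hx) (M h) (hMY h hhX) h1.symm
      · exact hht (hMinj hhX (htX x hx) h1 ▸ hx)

lemma chain_mem_X : ∀ (l : List V) (z : V), l.Chain' (Hrel A X M) → l.head? = some z →
    z ∈ X → ∀ v ∈ l, v ∈ X
  | [], z => by simp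
  | [x], z => by
    intro _ hh hz v hv
    simp at hh hv
    rw [← hh] at hz; rw [hv]; exact hh ▸ hz
  | x :: b :: t, z => by
    intro hch hh hz v hv
    simp at hh
    have h1 : Hrel A X M x b := (List.isChain_cons_cons.mp hch).1
    have h2 := (List.isChain_cons_cons.mp hch).2
    rcases List.mem_cons.mp hv with rfl | hv'
    · exact hh ▸ hz
    · exact chain_mem_X (b :: t) b h2 (by simp) h1.2.1 v hv'

lemma ilv_chain (hMA : ∀ x ∈ X, A x (M x)) (hdisjXY : ∀ v ∈ X, M v ∉ X) :
    ∀ (t : List V) (h : V), (∀ v ∈ h :: t, v ∈ X) → (h :: t).Chain' (Hrel A X M) →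
      (ilv M (h :: t)).Chain' A ∧ Alt (InM X M) (NotM A X M) (ilv M (h :: t)) ∧
        (ilv M (h :: t)).getLast? = some (M ((h :: t).getLast (by simp)))
  | [], h => by
    intro hmem _
    have hhX : h ∈ X := hmem h (by simp)
    refine ⟨?_, ?_, ?_⟩
    · simp [ilv]; exact List.isChain_pair.mpr (hMA h hhX)
    · simp [ilv, Alt]; exact ⟨hhX, rfl⟩
    · simp [ilv]
  | h' :: t', h => by
    intro hmem hch
    have hhX : h ∈ X := hmem h (by simp)
    have harc : Hrel A X M h h' := (List.isChain_cons_cons.mp hch).1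
    have hrest := (List.isChain_cons_cons.mp hch).2
    have hmem' : ∀ v ∈ h' :: t', v ∈ X := fun v hv => hmem v (by simp [List.mem_cons] at hv ⊢; tauto)
    obtain ⟨ih1, ih2, ih3⟩ := ilv_chain hMA hdisjXY t' h' hmem' hrest
    refine ⟨?_, ?_, ?_⟩
    · show (h :: M h :: ilv M (h' :: t')).Chain' A
      rw [show ilv M (h' :: t') = h' :: M h' :: ilv M t' from rfl] at ih1 ⊢
      exact List.isChain_cons_cons.mpr ⟨hMA h hhX,
        List.isChain_cons_cons.mpr ⟨harc.2.2, ih1⟩⟩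
    · show Alt (InM X M) (NotM A X M) (h :: M h :: ilv M (h' :: t'))
      rw [show ilv M (h' :: t') = h' :: M h' :: ilv M t' from rfl] at ih2 ⊢
      exact ⟨⟨hhX, rfl⟩, ⟨harc.2.2, fun hin => hdisjXY h hhX hin.1⟩, ih2⟩
    · show (h :: M h :: ilv M (h' :: t')).getLast? = _
      rw [show (h :: M h :: ilv M (h' :: t')) = [h, M h] ++ ilv M (h' :: t') from rfl,
        List.getLast?_append_of_ne_nil _ (by simp [ilv]), ih3]
      rw [List.getLast_cons (by simp : (h' :: t') ≠ [])]

lemma ilv_cyc (hMA : ∀ x ∈ X, A x (M x)) (hdisjXY : ∀ v ∈ X, M v ∉ X) :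
    ∀ (t : List V) (h w : V), (∀ v ∈ h :: t, v ∈ X) → (h :: t).Chain' (Hrel A X M) →
      Hrel A X M ((h :: t).getLast (by simp)) w →
      (ilv M (h :: t) ++ [w]).Chain' A ∧ Alt (InM X M) (NotM A X M) (ilv M (h :: t) ++ [w])
  | [], h, w => by
    intro hmem _ hcl
    have hhX : h ∈ X := hmem h (by simp)
    simp only [List.getLast_singleton] at hcl
    constructor
    · show (h :: M h :: [w]).Chain' A
      exact List.isChain_cons_cons.mpr ⟨hMA h hhX, List.isChain_cons_cons.mpr ⟨hcl.2.2, by simp⟩⟩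
    · show Alt (InM X M) (NotM A X M) (h :: M h :: [w])
      exact ⟨⟨hhX, rfl⟩, ⟨hcl.2.2, fun hin => hdisjXY h hhX hin.1⟩, trivial⟩
  | h' :: t', h, w => by
    intro hmem hch hcl
    have hhX : h ∈ X := hmem h (by simp)
    have harc : Hrel A X M h h' := (List.isChain_cons_cons.mp hch).1
    have hrest := (List.isChain_cons_cons.mp hch).2
    have hmem' : ∀ v ∈ h' :: t', v ∈ X := fun v hv => hmem v (by simp [List.mem_cons] at hv ⊢; tauto)
    have hcl' : Hrel A X M ((h' :: t').getLast (by simp)) w := by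
      rwa [List.getLast_cons (by simp : (h' :: t') ≠ [])] at hcl
    obtain ⟨ih1, ih2⟩ := ilv_cyc hMA hdisjXY t' h' w hmem' hrest hcl'
    constructor
    · show (h :: M h :: (ilv M (h' :: t') ++ [w])).Chain' A
      rw [show ilv M (h' :: t') ++ [w] = h' :: (M h' :: ilv M t' ++ [w]) from rfl] at ih1 ⊢
      exact List.isChain_cons_cons.mpr ⟨hMA h hhX, List.isChain_cons_cons.mpr ⟨harc.2.2, ih1⟩⟩
    · show Alt (InM X M) (NotM A X M) (h :: M h :: (ilv M (h' :: t') ++ [w]))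
      rw [show ilv M (h' :: t') ++ [w] = h' :: (M h' :: ilv M t' ++ [w]) from rfl] at ih2 ⊢
      exact ⟨⟨hhX, rfl⟩, ⟨harc.2.2, fun hin => hdisjXY h hhX hin.1⟩, ih2⟩

end WithData

/-- a balanced bipartite digraph with classes of cardinality `a' ≥ 3`,
possessing a complete matching `M'` from `X'` to `Y'` and satisfying condition (A),
contains an `M'`-compatible oriented cycle of length at least `a'`. -/
theorem stmt6 {V : Type} [Fintype V] [DecidableEq V] (A : V → V → Prop)
    (X Y : Finset V) (a : ℕ) (ha : 3 ≤ a)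
    (hbb : BalancedBipartite A X Y a)
    (M : V → V) (hmatch : CompleteMatching A X Y M)
    (hA : CondA A X Y M a) :
    ∃ p : List V, IsCompatCycle A X M p ∧ a ≤ p.length := by
  classical
  obtain ⟨hXcard, hYcard, hdisj, hcover, harcs⟩ := hbb
  obtain ⟨hM', hMinj⟩ := hmatch
  have hMY : ∀ x ∈ X, M x ∈ Y := fun x hx => (hM' x hx).1
  have hMA : ∀ x ∈ X, A x (M x) := fun x hx => (hM' x hx).2
  have hdisjXY : ∀ v ∈ X, M v ∉ X := fun v hv hmem =>
    Finset.disjoint_left.mp hdisj hmem (hMY v hv)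
  have himg : X.image M = Y := by
    apply Finset.eq_of_subset_of_card_le
    · intro y hy
      obtain ⟨x, hx, rfl⟩ := Finset.mem_image.mp hy
      exact hMY x hx
    · rw [Finset.card_image_of_injOn hMinj, hXcard, hYcard]
  have hHX : ∀ u v, Hrel A X M u v → u ∈ X ∧ v ∈ X := fun u v h => ⟨h.1, h.2.1⟩
  -- degree bounds
  have hdegX : ∀ x ∈ X, deg A x ≤ a + inN (Hrel A X M) x := by
    intro x hx
    have hout : outdeg A x ≤ a := by
      have hsub : {w | A x w} ⊆ (↑Y : Set V) := by
        intro w hw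
        rcases harcs x w hw with ⟨_, h⟩ | ⟨hx', _⟩
        · exact h
        · exact absurd hx' (Finset.disjoint_left.mp hdisj hx)
      calc outdeg A x = {w | A x w}.ncard := Nat.card_coe_set_eq _
        _ ≤ (↑Y : Set V).ncard := Set.ncard_le_ncard hsub (Finset.finite_toSet _)
        _ = a := by rw [Set.ncard_coe_finset, hYcard]
    have hin : indeg A x ≤ inN (Hrel A X M) x := by
      set g : V → V := fun w => if h : ∃ z ∈ X, M z = w then h.choose else w with hg
      have hgkey : ∀ w, A w x → g w ∈ X ∧ M (g w) = w := by
        intro w hw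
        have hwY : w ∈ Y := by
          rcases harcs w x hw with ⟨_, hxy⟩ | ⟨h1, _⟩
          · exact absurd hxy (Finset.disjoint_left.mp hdisj hx)
          · exact h1
        rw [← himg] at hwY
        obtain ⟨z, hz, hzw⟩ := Finset.mem_image.mp hwY
        have hex : ∃ z ∈ X, M z = w := ⟨z, hz, hzw⟩
        rw [hg]; simp only [dif_pos hex]
        obtain ⟨h1, h2⟩ := hex.choose_spec
        exact ⟨h1, h2⟩
      calc indeg A x = {w | A w x}.ncard := Nat.card_coe_set_eq _
        _ ≤ {z | Hrel A X M z x}.ncard := by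
            refine Set.ncard_le_ncard_of_injOn g ?_ ?_ (Set.toFinite _)
            · intro w hw
              obtain ⟨h1, h2⟩ := hgkey w hw
              exact ⟨h1, hx, by rw [h2]; exact hw⟩
            · intro w₁ h₁ w₂ h₂ h
              rw [← (hgkey w₁ h₁).2, ← (hgkey w₂ h₂).2, h]
        _ = inN (Hrel A X M) x := rfl
    have : deg A x = outdeg A x + indeg A x := rfl
    omega
  have hdegY : ∀ u ∈ X, deg A (M u) ≤ a + outN (Hrel A X M) u := by
    intro u hu
    have huY : M u ∈ Y := hMY u hu
    have hin : indeg A (M u) ≤ a := by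
      have hsub : {w | A w (M u)} ⊆ (↑X : Set V) := by
        intro w hw
        rcases harcs w (M u) hw with ⟨hwX, _⟩ | ⟨_, hMuX⟩
        · exact hwX
        · exact absurd (hMY u hu) (Finset.disjoint_left.mp hdisj hMuX)
      calc indeg A (M u) = {w | A w (M u)}.ncard := Nat.card_coe_set_eq _
        _ ≤ (↑X : Set V).ncard := Set.ncard_le_ncard hsub (Finset.finite_toSet _)
        _ = a := by rw [Set.ncard_coe_finset, hXcard]
    have hout : outdeg A (M u) ≤ outN (Hrel A X M) u := by
      have hsub : {w | A (M u) w} ⊆ {w | Hrel A X M u w} := by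
        intro w hw
        have hwX : w ∈ X := by
          rcases harcs (M u) w hw with ⟨hMuX, _⟩ | ⟨_, hwX⟩
          · exact absurd (hMY u hu) (Finset.disjoint_left.mp hdisj hMuX)
          · exact hwX
        exact ⟨hu, hwX, hw⟩
      calc outdeg A (M u) = {w | A (M u) w}.ncard := Nat.card_coe_set_eq _
        _ ≤ {w | Hrel A X M u w}.ncard := Set.ncard_le_ncard hsub (Set.toFinite _)
        _ = outN (Hrel A X M) u := rfl
    have : deg A (M u) = outdeg A (M u) + indeg A (M u) := rfl
    omega
  -- the reachability condition on the auxiliary digraph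
  have hpath : ∀ z u, z ∈ X → Reach (Hrel A X M) z u →
      ∃ p, IsCompatPathFromTo A X M p z (M u) := by
    rintro z u hz ⟨q, hqne, hqnd, hqch, hqh, hql⟩
    obtain ⟨h, t, rfl⟩ := List.exists_cons_of_ne_nil hqne
    have hhz : h = z := by simpa using hqh
    subst hhz
    have hmem : ∀ v ∈ h :: t, v ∈ X := chain_mem_X (h :: t) h hqch (by simp) hz
    obtain ⟨hc1, hc2, hc3⟩ := ilv_chain hMA hdisjXY t h hmem hqch
    have hlast : (h :: t).getLast (by simp) = u := by
      have h2 := List.getLast?_eq_getLast (l := h :: t) (by simp)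
      rw [hql] at h2
      exact Option.some_injective _ h2.symm
    refine ⟨ilv M (h :: t),
      ⟨by simp [ilv], ilv_nodup hdisj hMY hMinj _ hqnd hmem, hc1, Or.inl hc2⟩,
      by simp [ilv], ?_⟩
    rw [hc3, hlast]
  have hstar : ∀ z₁ u₁ z₂ u₂, z₁ ∈ X → u₁ ∈ X → z₂ ∈ X → u₂ ∈ X →
      Reach (Hrel A X M) z₁ u₁ → Reach (Hrel A X M) z₂ u₂ → z₁ ≠ z₂ → u₁ ≠ u₂ →
      2*a+2 ≤ inN (Hrel A X M) z₁ + outN (Hrel A X M) u₁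
        + inN (Hrel A X M) z₂ + outN (Hrel A X M) u₂ := by
    intro z₁ u₁ z₂ u₂ hz₁ hu₁ hz₂ hu₂ hr₁ hr₂ hzz huu
    have hMuu : M u₁ ≠ M u₂ := fun h => huu (hMinj hu₁ hu₂ h)
    have hsum := hA z₁ z₂ (M u₁) (M u₂) hz₁ hz₂ (hMY u₁ hu₁) (hMY u₂ hu₂) hzz hMuu
      (hpath z₁ u₁ hz₁ hr₁) (hpath z₂ u₂ hz₂ hr₂)
    have b₁ := hdegX z₁ hz₁
    have b₂ := hdegY u₁ hu₁
    have b₃ := hdegX z₂ hz₂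
    have b₄ := hdegY u₂ hu₂
    omega
  -- extract a long cycle in the auxiliary digraph
  obtain ⟨c, hcyc, hcX, hclen⟩ := key (Hrel A X M) X hHX a ha hXcard hstar
  obtain ⟨hcnd, hcch, u, v, hch?, hcl?, hcvu⟩ := hcyc
  obtain ⟨h, t, rfl⟩ := List.exists_cons_of_ne_nil
    (fun hnil => by rw [hnil] at hch?; simp at hch? : (c ≠ []))
  have hhu : h = u := by simpa using hch?
  have hgl : (h :: t).getLast (by simp) = v := by
    have h2 := List.getLast?_eq_getLast (l := h :: t) (by simp)
    rw [hcl?] at h2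
    exact Option.some_injective _ h2.symm
  have hclose : Hrel A X M ((h :: t).getLast (by simp)) h := by
    rw [hgl, hhu]; exact hcvu
  obtain ⟨hch, halt⟩ := ilv_cyc hMA hdisjXY t h h hcX hcch hclose
  refine ⟨ilv M (h :: t),
    ⟨?_, ilv_nodup hdisj hMY hMinj _ hcnd hcX, h, by simp [ilv], hch, Or.inl halt⟩, ?_⟩
  · rw [ilv_length]; simp only [List.length_cons]; omega
  · rw [ilv_length]
    simp only [List.length_cons] at hclen ⊢
    omega

end BipDigraph
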